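/- Let M be a deterministic single-tape Turing machine that halts within τ(N) steps on every input of length at most N, and let f(x) ∈ {accept, reject} be its output on input x. Then there is a chain of thought g over a countable alphabet Ξ (recording at each step the head's tape position, the action taken, and the new state), expressible in UHAT, such that for every input x, g(x) ends in f(x) and |g(x)| = O(τ(|x|)). -/

import Mathlib

open Matrix Filter

/-- A unique-hard-attention (UHAT) transformer over vocabulary type `V`. -/
structure UHAT (V : Type*) where
  /-- width -/
  d : ℕ
  /-- maximal context size -/
  nmax : ℕ
  /-- number of layers -/
  L : ℕ
  /-- number of heads per layer -/
  H : ℕ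
  /-- the (finite) vocabulary -/
  vocab : Finset V
  /-- token embeddings -/
  embed : V → Fin d → ℝ
  /-- positional encodings -/
  pos : ℕ → Fin d → ℝ
  /-- key matrices (layer, head) -/
  Kmat : ℕ → ℕ → Matrix (Fin d) (Fin d) ℝ
  /-- query matrices (layer, head) -/
  Qmat : ℕ → ℕ → Matrix (Fin d) (Fin d) ℝ
  /-- value matrices (layer, head) -/
  Vmat : ℕ → ℕ → Matrix (Fin d) (Fin d) ℝ
  /-- (arbitrary) MLP maps, one for each layer -/
  mlp : ℕ → (Fin d → ℝ) → Fin d → ℝ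
  /-- output matrix, one row per vocabulary item -/
  outm : V → Fin d → ℝ

open Classical in
/-- The smallest `j ≤ i` maximizing `f j` (unique hard attention with leftmost
tie-breaking and causal masking). -/
noncomputable def argmaxLeft {n : ℕ} (i : Fin n) (f : Fin n → ℝ) : Fin n :=
  ((Finset.Iic i).filter fun j => ∀ j' ∈ Finset.Iic i, f j' ≤ f j).min'
    (by
      obtain ⟨b, hb, hmax⟩ :=
        (Finset.Iic i).exists_max_image f ⟨i, Finset.mem_Iic.mpr le_rfl⟩
      exact ⟨b, Finset.mem_filter.mpr ⟨hb, hmax⟩⟩)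

/-- Activations `y_i^{(k)}` of a UHAT transformer on the input string `w`. -/
noncomputable def UHAT.act {V : Type*} (T : UHAT V) {n : ℕ} (w : Fin n → V) :
    ℕ → Fin n → Fin T.d → ℝ
  | 0, i => fun t => T.embed (w i) t + T.pos i.val t
  | k + 1, i =>
      T.mlp k (T.act w k i +
        ∑ h ∈ Finset.range T.H,
          (T.Vmat k h).mulVec
            (T.act w k (argmaxLeft i fun j =>
              (T.Kmat k h).mulVec (T.act w k j) ⬝ᵥ (T.Qmat k h).mulVec (T.act w k i))))

/-- The output of the transformer at (0-indexed) position `i` of the string `w`: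
a score for each vocabulary item. -/
noncomputable def UHAT.output {V : Type*} (T : UHAT V) (w : List V) (i : ℕ) : V → ℝ :=
  if h : i < w.length then fun v => T.outm v ⬝ᵥ T.act w.get T.L ⟨i, h⟩ else 0

open Classical in
/-- One-hot vector over the vocabulary. -/
noncomputable def oneHot {V : Type*} (v : V) : V → ℝ := fun u => if u = v then 1 else 0

/-- `T` computes the chain of thought `y` on input `w`: all symbols of `w ++ y` are in the
vocabulary, the string fits into the context window, and for each `i = 1, …, |y|`, the
output at (1-indexed) position `|w| + i - 1` is the one-hot vector of `yᵢ`. -/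
def UHAT.Computes {V : Type*} (T : UHAT V) (w y : List V) : Prop :=
  (∀ v ∈ w ++ y, v ∈ T.vocab) ∧ (w ++ y).length ≤ T.nmax ∧
    ∀ i : Fin y.length, T.output (w ++ y) (w.length + i.val - 1) = oneHot (y.get i)

/-- The chain of thought `g` (with input symbols included into the CoT alphabet via `ι`)
is expressible in UHAT: there are uniform bounds `L`, `H` on layers and heads such that for
every total length `n` some UHAT transformer computes `g` on all inputs of total length `n`. -/
def ExpressibleUHAT {S V : Type*} (ι : S → V) (g : List S → List V) : Prop :=
  ∃ L H : ℕ, ∀ n : ℕ, ∃ T : UHAT V, T.L ≤ L ∧ T.H ≤ H ∧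
    ∀ x : List S, (x.map ι ++ g x).length = n → T.Computes (x.map ι) (g x)

/-- Worst-case CoT length over inputs of length `N`. -/
noncomputable def maxCoTLen {S V : Type*} [Fintype S] (g : List S → List V) (N : ℕ) : ℕ :=
  Finset.univ.sup fun x : Fin N → S => (g (List.ofFn x)).length

/-- `x` is consistent with the restriction `ρ` (`none` plays the role of `*`). -/
def ConsistentWith {S : Type*} {N : ℕ} (ρ : Fin N → Option S) (x : Fin N → S) : Prop :=
  ∀ i : Fin N, ∀ s : S, ρ i = some s → x i = s

/-- Parity of a bit string: `true` iff the number of `1`s is odd. -/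
def parity (x : List Bool) : Bool := decide (x.count true % 2 = 1)

/-- Actions of a single-tape Turing machine: move left, move right, or write a symbol. -/
inductive TMAct (Γ : Type*) : Type _
  | left : TMAct Γ
  | right : TMAct Γ
  | write (σ : Γ) : TMAct Γ

/-- A deterministic single-tape Turing machine with tape alphabet `Γ` and state set `Q`. -/
structure TuringMachine (Γ Q : Type*) where
  /-- the blank symbol -/
  blank : Γ
  /-- the start state -/
  start : Q
  /-- the terminating set -/
  halt : Q → Bool
  /-- whether a (final) state indicates acceptance -/
  accept : Q → Bool
  /-- the transition function -/
  trans : Γ → Q → TMAct Γ × Q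

/-- A configuration: tape contents (positions `0, 1, 2, …`), head position, state. -/
structure TMCfg (Γ Q : Type*) where
  tape : ℕ → Γ
  pos : ℕ
  state : Q

/-- One computation step. -/
def TuringMachine.stepCfg {Γ Q : Type*} (M : TuringMachine Γ Q) (c : TMCfg Γ Q) :
    TMCfg Γ Q :=
  match M.trans (c.tape c.pos) c.state with
  | (TMAct.left, q) => ⟨c.tape, c.pos - 1, q⟩
  | (TMAct.right, q) => ⟨c.tape, c.pos + 1, q⟩
  | (TMAct.write σ, q) => ⟨fun i => if i = c.pos then σ else c.tape i, c.pos, q⟩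

/-- The configuration after `k` steps on input `x` (input written at positions
`0, …, |x|-1`, blanks elsewhere, head at position 0, start state). -/
def TuringMachine.cfgAt {Γ Q : Type*} (M : TuringMachine Γ Q) (x : List Γ) (k : ℕ) :
    TMCfg Γ Q :=
  M.stepCfg^[k] ⟨fun i => x.getD i M.blank, 0, M.start⟩

namespace TuringMachine

variable {Γ Q : Type*} (M : TuringMachine Γ Q)

/-- The "frozen" step: do nothing once halted. -/
def step' (c : TMCfg Γ Q) : TMCfg Γ Q := if M.halt c.state then c else M.stepCfg c

/-- The frozen run. -/
def fcfg (x : List Γ) (k : ℕ) : TMCfg Γ Q :=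
  M.step'^[k] ⟨fun i => x.getD i M.blank, 0, M.start⟩

lemma cfgAt_succ (x : List Γ) (k : ℕ) : M.cfgAt x (k + 1) = M.stepCfg (M.cfgAt x k) :=
  Function.iterate_succ_apply' _ _ _

lemma fcfg_succ (x : List Γ) (k : ℕ) : M.fcfg x (k + 1) = M.step' (M.fcfg x k) :=
  Function.iterate_succ_apply' _ _ _

lemma fcfg_eq_cfgAt {x : List Γ} {k : ℕ}
    (h : ∀ k' < k, M.halt (M.cfgAt x k').state = false) : M.fcfg x k = M.cfgAt x k := by
  induction k with
  | zero => rfl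
  | succ k ih =>
    rw [fcfg_succ, cfgAt_succ, ih (fun k' hk' => h k' (Nat.lt_succ_of_lt hk')), step',
      h k (Nat.lt_succ_self k)]
    simp

lemma fcfg_add_of_halt {x : List Γ} {k : ℕ} (h : M.halt (M.fcfg x k).state = true) (j : ℕ) :
    M.fcfg x (k + j) = M.fcfg x k := by
  induction j with
  | zero => rfl
  | succ j ih => rw [← Nat.add_assoc, fcfg_succ, ih, step', h]; simp

/-- One step on the "CoT token" representation `(head, state, list of writes)`,
given the symbol `σext` of the *original* tape at the head position. -/
def tokSym (σext : Γ) (c : ℕ × Q × List (ℕ × Γ)) : Γ :=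
  match c.2.2.find? (fun e => e.1 == c.1) with
  | some e => e.2
  | none => σext

def tokStep (σext : Γ) (c : ℕ × Q × List (ℕ × Γ)) : ℕ × Q × List (ℕ × Γ) :=
  if M.halt c.2.1 then c
  else
    match M.trans (tokSym σext c) c.2.1 with
    | (TMAct.left, q') => (c.1 - 1, q', c.2.2)
    | (TMAct.right, q') => (c.1 + 1, q', c.2.2)
    | (TMAct.write σ', q') => (c.1, q', (c.1, σ') :: c.2.2)

/-- The CoT token after `t` frozen steps. -/
def tokAt (x : List Γ) : ℕ → ℕ × Q × List (ℕ × Γ)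
  | 0 => (0, M.start, [])
  | t + 1 => M.tokStep (x.getD (tokAt x t).1 M.blank) (tokAt x t)

lemma tokAt_succ (x : List Γ) (t : ℕ) :
    M.tokAt x (t + 1) = M.tokStep (x.getD (M.tokAt x t).1 M.blank) (M.tokAt x t) := rfl

lemma tokAt_fst_le (x : List Γ) (t : ℕ) : (M.tokAt x t).1 ≤ t := by
  induction t with
  | zero => exact Nat.le_refl _
  | succ t ih =>
    rw [tokAt_succ, tokStep]
    split
    · exact Nat.le_succ_of_le ih
    · rcases h : M.trans (tokSym (x.getD (M.tokAt x t).1 M.blank) (M.tokAt x t))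
        (M.tokAt x t).2.1 with ⟨a, q'⟩
      cases a <;> simp <;> omega

/-- Overlay of a list of writes over a base tape. -/
def ov (W : List (ℕ × Γ)) (base : ℕ → Γ) (i : ℕ) : Γ :=
  match W.find? (fun e => e.1 == i) with
  | some e => e.2
  | none => base i

lemma tokAt_sim (x : List Γ) (t : ℕ) :
    (M.tokAt x t).1 = (M.fcfg x t).pos ∧ (M.tokAt x t).2.1 = (M.fcfg x t).state ∧
      ∀ i, ov (M.tokAt x t).2.2 (fun j => x.getD j M.blank) i = (M.fcfg x t).tape i := by
  induction t with
  | zero =>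
    refine ⟨rfl, rfl, fun i => ?_⟩
    simp [ov, tokAt, fcfg]
  | succ t ih =>
    obtain ⟨h1, h2, h3⟩ := ih
    rw [fcfg_succ, tokAt_succ, tokStep, step', h2]
    by_cases hh : M.halt (M.fcfg x t).state = true
    · rw [if_pos hh, if_pos hh]; exact ⟨h1, h2, h3⟩
    · rw [if_neg hh, if_neg hh]
      have hσ : tokSym (x.getD (M.tokAt x t).1 M.blank) (M.tokAt x t)
          = (M.fcfg x t).tape (M.fcfg x t).pos := by
        rw [← h1, ← h3 (M.tokAt x t).1]; rfl
      rw [stepCfg, hσ]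
      rcases htr : M.trans ((M.fcfg x t).tape (M.fcfg x t).pos) (M.fcfg x t).state with ⟨a, q'⟩
      cases a with
      | left => exact ⟨by simp [h1], rfl, h3⟩
      | right => exact ⟨by simp [h1], rfl, h3⟩
      | write σ' =>
        refine ⟨h1, rfl, fun i => ?_⟩
        show ov (((M.tokAt x t).1, σ') :: (M.tokAt x t).2.2) _ i = _
        by_cases hip : (M.tokAt x t).1 = i
        · have hb : ((((M.tokAt x t).1, σ') : ℕ × Γ).1 == i) = true := by
            simpa using hip
          rw [ov, List.find?_cons, hb]
          simp only [← hip, h1]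
          simp
        · have hb : ((((M.tokAt x t).1, σ') : ℕ × Γ).1 == i) = false := by
            simpa using hip
          rw [ov, List.find?_cons, hb]
          rw [show (match (M.tokAt x t).2.2.find? (fun e => e.1 == i) with
            | some e => e.2 | none => x.getD i M.blank) = ov (M.tokAt x t).2.2
              (fun j => x.getD j M.blank) i from rfl, h3]
          have : i ≠ (M.fcfg x t).pos := by rw [← h1]; omega
          simp [this]

end TuringMachine
namespace TuringMachine

variable {Γ Q Γ' Q' : Type*}

/-- Transport of actions along a map of alphabets. -/
def mapAct (eΓ : Γ → Γ') : TMAct Γ → TMAct Γ'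
  | TMAct.left => TMAct.left
  | TMAct.right => TMAct.right
  | TMAct.write σ => TMAct.write (eΓ σ)

/-- Transport of a Turing machine along equivalences of alphabets and states. -/
def mapTM (M : TuringMachine Γ Q) (eΓ : Γ ≃ Γ') (eQ : Q ≃ Q') : TuringMachine Γ' Q' where
  blank := eΓ M.blank
  start := eQ M.start
  halt q := M.halt (eQ.symm q)
  accept q := M.accept (eQ.symm q)
  trans σ q := (mapAct eΓ (M.trans (eΓ.symm σ) (eQ.symm q)).1, eQ (M.trans (eΓ.symm σ) (eQ.symm q)).2)

/-- Transport of configurations. -/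
def mapCfg (eΓ : Γ → Γ') (eQ : Q → Q') (c : TMCfg Γ Q) : TMCfg Γ' Q' :=
  ⟨fun i => eΓ (c.tape i), c.pos, eQ c.state⟩

lemma mapTM_stepCfg (M : TuringMachine Γ Q) (eΓ : Γ ≃ Γ') (eQ : Q ≃ Q') (c : TMCfg Γ Q) :
    (M.mapTM eΓ eQ).stepCfg (mapCfg eΓ eQ c) = mapCfg eΓ eQ (M.stepCfg c) := by
  unfold stepCfg
  rcases htr : M.trans (c.tape c.pos) c.state with ⟨a, q⟩
  have h2 : (M.mapTM eΓ eQ).trans ((mapCfg eΓ eQ c).tape (mapCfg eΓ eQ c).pos)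
      ((mapCfg eΓ eQ c).state) = (mapAct eΓ a, eQ q) := by
    show (M.mapTM eΓ eQ).trans (eΓ (c.tape c.pos)) (eQ c.state) = _
    simp [mapTM, htr]
  rw [h2]
  cases a <;> simp [mapCfg, mapAct, apply_ite] <;> rfl

lemma mapTM_cfgAt (M : TuringMachine Γ Q) (eΓ : Γ ≃ Γ') (eQ : Q ≃ Q') (x : List Γ) (k : ℕ) :
    (M.mapTM eΓ eQ).cfgAt (x.map eΓ) k = mapCfg eΓ eQ (M.cfgAt x k) := by
  induction k with
  | zero =>
    show (⟨fun i => (x.map eΓ).getD i (eΓ M.blank), 0, eQ M.start⟩ : TMCfg Γ' Q') = _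
    unfold cfgAt mapCfg
    simp only [Function.iterate_zero, id]
    congr 1
    funext i
    exact List.getD_map x M.blank (⇑eΓ)
  | succ k ih => rw [cfgAt_succ, cfgAt_succ, ih, mapTM_stepCfg]

end TuringMachine
lemma argmaxLeft_eq {n : ℕ} (i j₀ : Fin n) (f : Fin n → ℝ) (h0 : j₀ ≤ i)
    (hmax : ∀ j, j ≤ i → f j ≤ f j₀) (hmin : ∀ j, j ≤ i → f j₀ ≤ f j → j₀ ≤ j) :
    argmaxLeft i f = j₀ := by
  classical
  apply le_antisymm
  · exact Finset.min'_le _ _ (Finset.mem_filter.mpr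
      ⟨Finset.mem_Iic.mpr h0, fun j' hj' => hmax _ (Finset.mem_Iic.mp hj')⟩)
  · apply Finset.le_min'
    intro y hy
    obtain ⟨hy1, hy2⟩ := Finset.mem_filter.mp hy
    exact hmin y (Finset.mem_Iic.mp hy1) (hy2 j₀ (Finset.mem_Iic.mpr h0))

lemma dot_sparse3 {d : ℕ} (a b c : Fin d) (hab : a ≠ b) (hac : a ≠ c) (hbc : b ≠ c)
    (y q : Fin d → ℝ) (hq : ∀ t, t ≠ a → t ≠ b → t ≠ c → q t = 0) :
    y ⬝ᵥ q = y a * q a + y b * q b + y c * q c := by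
  rw [dotProduct, ← Finset.sum_subset (Finset.subset_univ ({a, b, c} : Finset (Fin d)))]
  · rw [Finset.sum_insert (by simp [hab, hac]), Finset.sum_insert (by simp [hbc]),
      Finset.sum_singleton, add_assoc]
  · intro t _ ht
    simp only [Finset.mem_insert, Finset.mem_singleton, not_or] at ht
    rw [hq t ht.1 ht.2.1 ht.2.2, mul_zero]

lemma mulVec_single_entry {d : ℕ} (a b : Fin d) (c : ℝ) (y : Fin d → ℝ) :
    (Matrix.of fun t t' : Fin d => if t = a ∧ t' = b then c else 0).mulVec y
      = fun t => if t = a then c * y b else 0 := by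
  funext t
  show ∑ t' : Fin d, (if t = a ∧ t' = b then c else 0) * y t' = _
  by_cases h : t = a
  · subst h
    rw [Finset.sum_eq_single b (fun t' _ ht' => by simp [ht'])
      (fun hb => absurd (Finset.mem_univ b) hb)]
    simp
  · rw [Finset.sum_eq_single b (fun t' _ ht' => by simp [h]) (fun hb => by simp [h])]
    simp [h]
set_option synthInstance.maxHeartbeats 200000
set_option synthInstance.maxSize 1000
section MasterDefs
set_option linter.unusedSectionVars false

/-- The CoT alphabet: input symbols, booleans (final answers), and configuration tokens. -/
abbrev XiT (Γ₀ Q₀ : Type) : Type := Γ₀ ⊕ Bool ⊕ (ℕ × Q₀ × List (ℕ × Γ₀))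

variable {Γ₀ Q₀ : Type} [Fintype Γ₀] [DecidableEq Γ₀] [Countable Q₀] [DecidableEq Q₀]

noncomputable def encodXi (Γ₀ Q₀ : Type) [Fintype Γ₀] [Countable Q₀] :
    Encodable (XiT Γ₀ Q₀) :=
  Encodable.ofCountable _

noncomputable def encXi (v : XiT Γ₀ Q₀) : ℝ := ((encodXi Γ₀ Q₀).encode v : ℝ)

noncomputable def decXi (M : TuringMachine Γ₀ Q₀) (r : ℝ) : XiT Γ₀ Q₀ :=
  ((encodXi Γ₀ Q₀).decode ⌊r⌋₊).getD (Sum.inl M.blank)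

lemma decXi_encXi (M : TuringMachine Γ₀ Q₀) (v : XiT Γ₀ Q₀) : decXi M (encXi v) = v := by
  rw [decXi, encXi, Nat.floor_natCast, (encodXi Γ₀ Q₀).encodek]
  rfl

/-- The answer recorded at the end of the chain of thought. -/
noncomputable def ansB (M : TuringMachine Γ₀ Q₀) (τ : ℕ → ℕ) (x : List Γ₀) : Bool :=
  M.accept (M.tokAt x (τ x.length)).2.1

/-- The chain of thought. -/
noncomputable def gCoT (M : TuringMachine Γ₀ Q₀) (τ : ℕ → ℕ) (x : List Γ₀) :
    List (XiT Γ₀ Q₀) :=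
  if x.length = 0 then List.replicate (τ 0 + 2) (Sum.inr (Sum.inl (ansB M τ x)))
  else ((List.range (τ x.length + 1)).map fun t => Sum.inr (Sum.inr (M.tokAt x t))) ++
    [Sum.inr (Sum.inl (ansB M τ x))]

lemma gCoT_length (M : TuringMachine Γ₀ Q₀) (τ : ℕ → ℕ) (x : List Γ₀) :
    (gCoT M τ x).length = τ x.length + 2 := by
  rw [gCoT]
  by_cases h : x.length = 0 <;> simp [h]

variable (M : TuringMachine Γ₀ Q₀) (τ : ℕ → ℕ) (n : ℕ)

/-- The vocabulary used at context size `n`. -/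
noncomputable def Sfin : Finset (XiT Γ₀ Q₀) :=
  (Finset.range (n + 1)).biUnion fun m =>
    (Finset.univ : Finset (Fin m → Γ₀)).biUnion fun xv =>
      (((List.ofFn xv).map Sum.inl) ++ gCoT M τ (List.ofFn xv)).toFinset

lemma mem_Sfin {x : List Γ₀} (hx : x.length ≤ n) {v : XiT Γ₀ Q₀}
    (hv : v ∈ x.map Sum.inl ++ gCoT M τ x) : v ∈ Sfin M τ n := by
  refine Finset.mem_biUnion.mpr ⟨x.length, Finset.mem_range.mpr (Nat.lt_succ_of_le hx), ?_⟩
  refine Finset.mem_biUnion.mpr ⟨fun i => x.get i, Finset.mem_univ _, ?_⟩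
  rw [List.mem_toFinset, List.ofFn_get]
  exact hv

/-- Transformer width. -/
noncomputable def dd : ℕ := 8 + (Sfin M τ n).card

/-- Named coordinates. -/
noncomputable def cd (j : ℕ) (h : j < 8 := by norm_num) : Fin (dd M τ n) :=
  ⟨j, lt_of_lt_of_le h (Nat.le_add_right 8 _)⟩

lemma cd_ne {j j' : ℕ} (h : j < 8) (h' : j' < 8) (hjj : j ≠ j') :
    cd M τ n j h ≠ cd M τ n j' h' := by
  simp [cd, Fin.ext_iff, hjj]

/-- Head position feature of a token. -/
def hpXi : XiT Γ₀ Q₀ → ℝ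
  | Sum.inr (Sum.inr c) => (c.1 : ℝ)
  | _ => 0

/-- Indicator feature of configuration tokens. -/
def indXi : XiT Γ₀ Q₀ → ℝ
  | Sum.inr (Sum.inr _) => 1
  | _ => 0

/-- Token embeddings. -/
noncomputable def embXi (v : XiT Γ₀ Q₀) : Fin (dd M τ n) → ℝ := fun t =>
  if t.val = 3 then encXi v else if t.val = 4 then hpXi v
  else if t.val = 5 then (hpXi v) ^ 2 else if t.val = 6 then indXi v else 0

/-- Positional encodings. -/
noncomputable def posE (i : ℕ) : Fin (dd M τ n) → ℝ := fun t =>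
  if t.val = 0 then 1 else if t.val = 1 then (i : ℝ) else if t.val = 2 then (i : ℝ) ^ 2 else 0

/-- The query matrix. -/
noncomputable def QmM : Matrix (Fin (dd M τ n)) (Fin (dd M τ n)) ℝ :=
  (Matrix.of fun t t' => if t = cd M τ n 0 ∧ t' = cd M τ n 5 then (-1 : ℝ) else 0) +
  ((Matrix.of fun t t' => if t = cd M τ n 1 ∧ t' = cd M τ n 4 then (2 : ℝ) else 0) +
   (Matrix.of fun t t' => if t = cd M τ n 2 ∧ t' = cd M τ n 6 then (-1 : ℝ) else 0))

/-- The value matrix. -/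
noncomputable def VmM : Matrix (Fin (dd M τ n)) (Fin (dd M τ n)) ℝ :=
  Matrix.of fun t t' => if t = cd M τ n 7 ∧ t' = cd M τ n 3 then (1 : ℝ) else 0

lemma VmM_mulVec (y : Fin (dd M τ n) → ℝ) :
    (VmM M τ n).mulVec y = fun t => if t = cd M τ n 7 then y (cd M τ n 3) else 0 := by
  rw [VmM, mulVec_single_entry]
  simp

lemma QmM_mulVec (y : Fin (dd M τ n) → ℝ) :
    (QmM M τ n).mulVec y = fun t =>
      (if t = cd M τ n 0 then -y (cd M τ n 5) else 0) +
      ((if t = cd M τ n 1 then 2 * y (cd M τ n 4) else 0) +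
       (if t = cd M τ n 2 then -y (cd M τ n 6) else 0)) := by
  rw [QmM, Matrix.add_mulVec, Matrix.add_mulVec, mulVec_single_entry, mulVec_single_entry,
    mulVec_single_entry]
  funext t
  simp [neg_mul]

/-- Output one-hot encoding of a vocabulary item. -/
noncomputable def outV (u : XiT Γ₀ Q₀) : Fin (dd M τ n) → ℝ :=
  if hu : u ∈ Sfin M τ n then
    Pi.single (⟨8 + ((Sfin M τ n).equivFin ⟨u, hu⟩ : Fin (Sfin M τ n).card),
      Nat.add_lt_add_left (Fin.is_lt _) 8⟩ : Fin (dd M τ n)) 1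
  else 0

lemma outV_dot {u : XiT Γ₀ Q₀} (v : XiT Γ₀ Q₀) (hu : u ∈ Sfin M τ n) :
    outV M τ n v ⬝ᵥ outV M τ n u = if v = u then 1 else 0 := by
  by_cases hv : v ∈ Sfin M τ n
  · rw [outV, outV, dif_pos hu, dif_pos hv, single_dotProduct, one_mul, Pi.single_apply]
    have : ((⟨8 + ((Sfin M τ n).equivFin ⟨v, hv⟩ : Fin (Sfin M τ n).card),
        Nat.add_lt_add_left (Fin.is_lt _) 8⟩ : Fin (dd M τ n)) =
        ⟨8 + ((Sfin M τ n).equivFin ⟨u, hu⟩ : Fin (Sfin M τ n).card),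
        Nat.add_lt_add_left (Fin.is_lt _) 8⟩) ↔ v = u := by
      refine Iff.trans Fin.ext_iff (Iff.trans Nat.add_left_cancel_iff ?_)
      constructor
      · intro h
        have := (Sfin M τ n).equivFin.injective (Fin.ext h)
        exact congrArg Subtype.val this
      · rintro rfl; rfl
    rw [if_congr this rfl rfl]
  · rw [outV, dif_neg hv, zero_dotProduct]
    have : v ≠ u := fun h => hv (h ▸ hu)
    rw [if_neg this]

/-- The next-token function implemented by the MLP. -/
noncomputable def nxtTok : XiT Γ₀ Q₀ → XiT Γ₀ Q₀ → ℝ → XiT Γ₀ Q₀ :=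
  fun cur att pr =>
    match cur with
    | Sum.inl _ => Sum.inr (Sum.inr (0, M.start, []))
    | Sum.inr (Sum.inl b) => Sum.inr (Sum.inl b)
    | Sum.inr (Sum.inr c) =>
        if pr = ((n - 2 : ℕ) : ℝ) then Sum.inr (Sum.inl (M.accept c.2.1))
        else Sum.inr (Sum.inr (M.tokStep (match att with
            | Sum.inl γ => γ
            | _ => M.blank) c))

/-- The transformer for context size `n`. -/
noncomputable abbrev TT : UHAT (XiT Γ₀ Q₀) where
  d := dd M τ n
  nmax := n
  L := 1
  H := 1
  vocab := Sfin M τ n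
  embed := embXi M τ n
  pos := posE M τ n
  Kmat := fun _ _ => 1
  Qmat := fun _ _ => QmM M τ n
  Vmat := fun _ _ => VmM M τ n
  mlp := fun _ z => outV M τ n (nxtTok M n (decXi M (z (cd M τ n 3)))
    (decXi M (z (cd M τ n 7))) (z (cd M τ n 1)))
  outm := outV M τ n

end MasterDefs
section MasterLemmas
set_option linter.unusedSectionVars false

variable {Γ₀ Q₀ : Type} [Fintype Γ₀] [DecidableEq Γ₀] [Countable Q₀] [DecidableEq Q₀]
variable (M : TuringMachine Γ₀ Q₀) (τ : ℕ → ℕ) (n : ℕ)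

lemma act0 {N : ℕ} (w : Fin N → XiT Γ₀ Q₀) (i : Fin N) :
    (TT M τ n).act w 0 i = fun t => embXi M τ n (w i) t + posE M τ n i.val t := rfl

lemma act0_cd0 {N : ℕ} (w : Fin N → XiT Γ₀ Q₀) (i : Fin N) :
    (TT M τ n).act w 0 i (cd M τ n 0) = 1 := by
  rw [act0]; simp [embXi, posE, cd]

lemma act0_cd1 {N : ℕ} (w : Fin N → XiT Γ₀ Q₀) (i : Fin N) :
    (TT M τ n).act w 0 i (cd M τ n 1) = (i.val : ℝ) := by
  rw [act0]; simp [embXi, posE, cd]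

lemma act0_cd2 {N : ℕ} (w : Fin N → XiT Γ₀ Q₀) (i : Fin N) :
    (TT M τ n).act w 0 i (cd M τ n 2) = (i.val : ℝ) ^ 2 := by
  rw [act0]; simp [embXi, posE, cd]

lemma act0_cd3 {N : ℕ} (w : Fin N → XiT Γ₀ Q₀) (i : Fin N) :
    (TT M τ n).act w 0 i (cd M τ n 3) = encXi (w i) := by
  rw [act0]; simp [embXi, posE, cd]

lemma act0_cd4 {N : ℕ} (w : Fin N → XiT Γ₀ Q₀) (i : Fin N) :
    (TT M τ n).act w 0 i (cd M τ n 4) = hpXi (w i) := by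
  rw [act0]; simp [embXi, posE, cd]

lemma act0_cd5 {N : ℕ} (w : Fin N → XiT Γ₀ Q₀) (i : Fin N) :
    (TT M τ n).act w 0 i (cd M τ n 5) = (hpXi (w i)) ^ 2 := by
  rw [act0]; simp [embXi, posE, cd]

lemma act0_cd6 {N : ℕ} (w : Fin N → XiT Γ₀ Q₀) (i : Fin N) :
    (TT M τ n).act w 0 i (cd M τ n 6) = indXi (w i) := by
  rw [act0]; simp [embXi, posE, cd]

lemma score_eq {N : ℕ} (w : Fin N → XiT Γ₀ Q₀) (i j : Fin N) :
    (1 : Matrix (Fin (dd M τ n)) (Fin (dd M τ n)) ℝ).mulVec ((TT M τ n).act w 0 j) ⬝ᵥ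
      (QmM M τ n).mulVec ((TT M τ n).act w 0 i)
    = -(hpXi (w i) ^ 2) + (j.val : ℝ) * (2 * hpXi (w i)) +
        (j.val : ℝ) ^ 2 * (-(indXi (w i))) := by
  rw [one_mulVec, QmM_mulVec,
    dot_sparse3 (cd M τ n 0) (cd M τ n 1) (cd M τ n 2)
      (cd_ne M τ n (by norm_num) (by norm_num) (by norm_num))
      (cd_ne M τ n (by norm_num) (by norm_num) (by norm_num))
      (cd_ne M τ n (by norm_num) (by norm_num) (by norm_num))
      _ _ (fun t h0 h1 h2 => by simp [h0, h1, h2])]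
  rw [if_pos rfl, if_pos rfl, if_pos rfl,
    if_neg (cd_ne M τ n (by norm_num) (by norm_num) (by norm_num)),
    if_neg (cd_ne M τ n (by norm_num) (by norm_num) (by norm_num)),
    if_neg (cd_ne M τ n (by norm_num) (by norm_num) (by norm_num)),
    if_neg (cd_ne M τ n (by norm_num) (by norm_num) (by norm_num)),
    if_neg (cd_ne M τ n (by norm_num) (by norm_num) (by norm_num)),
    if_neg (cd_ne M τ n (by norm_num) (by norm_num) (by norm_num))]
  rw [act0_cd0, act0_cd1, act0_cd2, act0_cd4, act0_cd5, act0_cd6]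
  ring

lemma argmax_config {N : ℕ} (w : Fin N → XiT Γ₀ Q₀) (i : Fin N) (c : ℕ × Q₀ × List (ℕ × Γ₀))
    (hc : w i = Sum.inr (Sum.inr c)) (hle : c.1 ≤ i.val) :
    argmaxLeft i (fun j => (1 : Matrix (Fin (dd M τ n)) (Fin (dd M τ n)) ℝ).mulVec
        ((TT M τ n).act w 0 j) ⬝ᵥ (QmM M τ n).mulVec ((TT M τ n).act w 0 i))
      = ⟨c.1, lt_of_le_of_lt hle i.isLt⟩ := by
  have hf : ∀ j : Fin N,
      (1 : Matrix (Fin (dd M τ n)) (Fin (dd M τ n)) ℝ).mulVec ((TT M τ n).act w 0 j) ⬝ᵥ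
        (QmM M τ n).mulVec ((TT M τ n).act w 0 i) = -(((j.val : ℝ) - (c.1 : ℝ)) ^ 2) := by
    intro j
    rw [score_eq, hc]
    simp only [hpXi, indXi]
    ring
  apply argmaxLeft_eq
  · exact hle
  · intro j hj
    rw [hf, hf]
    have h1 := sq_nonneg ((j.val : ℝ) - (c.1 : ℝ))
    simp only [Fin.val_mk]
    nlinarith
  · intro j hj hge
    rw [hf, hf] at hge
    simp only [Fin.val_mk] at hge
    have h2 : ((j.val : ℝ) - (c.1 : ℝ)) ^ 2 = 0 := by
      nlinarith [sq_nonneg ((j.val : ℝ) - (c.1 : ℝ))]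
    have h3 : (j.val : ℝ) = (c.1 : ℝ) := by
      have := pow_eq_zero_iff (n := 2) (by norm_num) |>.mp h2
      linarith [sub_eq_zero.mp this]
    have h4 : j.val = c.1 := Nat.cast_injective h3
    simp [Fin.le_def, h4]

lemma act1 {N : ℕ} (w : Fin N → XiT Γ₀ Q₀) (i : Fin N) :
    (TT M τ n).act w 1 i = outV M τ n (nxtTok M n (w i)
      (w (argmaxLeft i fun j => (1 : Matrix (Fin (dd M τ n)) (Fin (dd M τ n)) ℝ).mulVec
        ((TT M τ n).act w 0 j) ⬝ᵥ (QmM M τ n).mulVec ((TT M τ n).act w 0 i)))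
      (i.val : ℝ)) := by
  have h : (TT M τ n).act w 1 i = (TT M τ n).mlp 0 ((TT M τ n).act w 0 i +
      ∑ h ∈ Finset.range 1, (VmM M τ n).mulVec ((TT M τ n).act w 0
        (argmaxLeft i fun j => (1 : Matrix (Fin (dd M τ n)) (Fin (dd M τ n)) ℝ).mulVec
          ((TT M τ n).act w 0 j) ⬝ᵥ (QmM M τ n).mulVec ((TT M τ n).act w 0 i)))) := rfl
  rw [h, Finset.sum_range_one]
  set js := argmaxLeft i fun j => (1 : Matrix (Fin (dd M τ n)) (Fin (dd M τ n)) ℝ).mulVec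
    ((TT M τ n).act w 0 j) ⬝ᵥ (QmM M τ n).mulVec ((TT M τ n).act w 0 i) with hjs
  have hmlp : (TT M τ n).mlp 0 = fun z => outV M τ n (nxtTok M n (decXi M (z (cd M τ n 3)))
      (decXi M (z (cd M τ n 7))) (z (cd M τ n 1))) := rfl
  have h3 : ((TT M τ n).act w 0 i + (VmM M τ n).mulVec ((TT M τ n).act w 0 js)) (cd M τ n 3)
      = encXi (w i) := by
    rw [Pi.add_apply, VmM_mulVec, act0, act0]
    simp [embXi, posE, cd, Fin.ext_iff]
  have h7 : ((TT M τ n).act w 0 i + (VmM M τ n).mulVec ((TT M τ n).act w 0 js)) (cd M τ n 7)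
      = encXi (w js) := by
    rw [Pi.add_apply, VmM_mulVec, act0, act0]
    simp [embXi, posE, cd, Fin.ext_iff]
  have h1c : ((TT M τ n).act w 0 i + (VmM M τ n).mulVec ((TT M τ n).act w 0 js)) (cd M τ n 1)
      = (i.val : ℝ) := by
    rw [Pi.add_apply, VmM_mulVec, act0, act0]
    simp [embXi, posE, cd, Fin.ext_iff]
  rw [hmlp]
  simp only []
  rw [h3, h7, h1c, decXi_encXi, decXi_encXi]

end MasterLemmas
set_option maxHeartbeats 1000000 in
theorem master_cot {Γ₀ Q₀ : Type} [Fintype Γ₀] [DecidableEq Γ₀] [Countable Q₀]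
    [DecidableEq Q₀] (M : TuringMachine Γ₀ Q₀) (τ : ℕ → ℕ)
    (hhalt : ∀ x : List Γ₀, ∃ k ≤ τ x.length, M.halt (M.cfgAt x k).state = true) :
    ∃ (Ξ : Type) (_ : Countable Ξ) (ιΓ : Γ₀ → Ξ) (ιB : Bool → Ξ),
      Function.Injective ιΓ ∧ Function.Injective ιB ∧
      ∃ g : List Γ₀ → List Ξ, ExpressibleUHAT ιΓ g ∧
        (∀ (x : List Γ₀) (k : ℕ),
          (∀ k' < k, M.halt (M.cfgAt x k').state = false) →
          M.halt (M.cfgAt x k).state = true →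
          [ιB (M.accept (M.cfgAt x k).state)] <:+ g x) ∧
        ∃ c : ℕ, 0 < c ∧ ∀ x : List Γ₀, (g x).length ≤ c * (τ x.length + 1) := by
  refine ⟨XiT Γ₀ Q₀, inferInstance, Sum.inl, fun b => Sum.inr (Sum.inl b),
    Sum.inl_injective, fun a b h => by simpa using h, gCoT M τ, ?_, ?_, ?_⟩
  · -- Expressibility
    refine ⟨1, 1, fun n => ⟨TT M τ n, le_refl _, le_refl _, ?_⟩⟩
    intro x hlen
    have hylen : (gCoT M τ x).length = τ x.length + 2 := gCoT_length M τ x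
    have hmn : x.length + (τ x.length + 2) = n := by
      rw [← hlen]; simp [hylen]
    refine ⟨fun v hv => mem_Sfin M τ n (by omega) hv, by simp [TT]; omega, ?_⟩
    intro i
    simp only [List.length_map]
    set w' : List (XiT Γ₀ Q₀) := x.map Sum.inl ++ gCoT M τ x with hw'
    have hwlen : w'.length = n := by simp [hw', hylen]; omega
    have hp : x.length + i.val - 1 < w'.length := by
      have h1 := i.isLt; have h2 := hylen; omega
    rw [UHAT.output, dif_pos hp]
    have hL : (TT M τ n).L = 1 := rfl
    rw [hL, act1]
    have key : nxtTok M n (w'.get ⟨x.length + i.val - 1, hp⟩)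
        (w'.get (argmaxLeft ⟨x.length + i.val - 1, hp⟩
          fun j => (1 : Matrix (Fin (dd M τ n)) (Fin (dd M τ n)) ℝ).mulVec
            ((TT M τ n).act w'.get 0 j) ⬝ᵥ (QmM M τ n).mulVec
              ((TT M τ n).act w'.get 0 ⟨x.length + i.val - 1, hp⟩)))
        (((⟨x.length + i.val - 1, hp⟩ : Fin w'.length).val : ℕ) : ℝ)
        = (gCoT M τ x).get i := by
      rcases Nat.eq_zero_or_pos x.length with hm0 | hm1
      · -- empty input: the whole string consists of answer tokens, which are echoed
        have hx : x = [] := List.length_eq_zero_iff.mp hm0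
        subst hx
        have hg : gCoT M τ ([] : List Γ₀) = List.replicate (τ 0 + 2)
            (Sum.inr (Sum.inl (ansB M τ ([] : List Γ₀)))) := by
          rw [gCoT]; simp
        have hcw : w'.get ⟨List.length ([] : List Γ₀) + i.val - 1, hp⟩
            = Sum.inr (Sum.inl (ansB M τ ([] : List Γ₀))) := by
          rw [List.get_eq_getElem]
          simp [hw', hg]
        have htgt : (gCoT M τ ([] : List Γ₀)).get i
            = Sum.inr (Sum.inl (ansB M τ ([] : List Γ₀))) := by
          rw [List.get_eq_getElem]
          simp [hg]
        rw [hcw, htgt]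
        rfl
      · -- nonempty input
        have hg : gCoT M τ x = ((List.range (τ x.length + 1)).map fun t =>
            (Sum.inr (Sum.inr (M.tokAt x t)) : XiT Γ₀ Q₀)) ++
            [Sum.inr (Sum.inl (ansB M τ x))] := by
          rw [gCoT, if_neg (by omega)]
        have hyA : ∀ (s : ℕ) (hs : s ≤ τ x.length) (hlt : s < (gCoT M τ x).length),
            (gCoT M τ x)[s] = Sum.inr (Sum.inr (M.tokAt x s)) := by
          intro s hs hlt
          simp only [hg]
          rw [List.getElem_append_left
            (by simp only [List.length_map, List.length_range]; omega)]
          simp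
        have hyLast : ∀ (hlt : τ x.length + 1 < (gCoT M τ x).length),
            (gCoT M τ x)[τ x.length + 1] = Sum.inr (Sum.inl (ansB M τ x)) := by
          intro hlt
          simp only [hg]
          rw [List.getElem_append_right
            (by simp only [List.length_map, List.length_range]; omega)]
          simp
        have hgetw : ∀ (s : ℕ) (h2 : x.length + s < w'.length)
            (h3 : s < (gCoT M τ x).length),
            w'.get ⟨x.length + s, h2⟩ = (gCoT M τ x)[s] := by
          intro s h2 h3
          rw [List.get_eq_getElem]
          simp only [hw']
          rw [List.getElem_append_right (by simp)]
          congr 1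
          simp
        have hgetx : ∀ (s : ℕ) (h2 : s < w'.length) (h3 : s < x.length),
            w'.get ⟨s, h2⟩ = Sum.inl (x[s]'h3) := by
          intro s h2 h3
          rw [List.get_eq_getElem]
          simp only [hw']
          rw [List.getElem_append_left (by simpa using h3)]
          simp
        rcases Nat.eq_zero_or_pos i.val with hi0 | hi1
        · -- first CoT token: the initial configuration token
          have hpf : (⟨x.length + i.val - 1, hp⟩ : Fin w'.length)
              = ⟨x.length - 1, by omega⟩ := Fin.ext (by simp; omega)
          rw [hpf, hgetx (x.length - 1) _ (by omega)]
          have htgt : (gCoT M τ x).get i = Sum.inr (Sum.inr (M.tokAt x 0)) := by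
            rw [List.get_eq_getElem]
            simp only [hi0]
            exact hyA 0 (by omega) (by omega)
          rw [htgt]
          rfl
        · obtain ⟨t, hti⟩ : ∃ t, i.val = t + 1 := ⟨i.val - 1, by omega⟩
          have htτ : t ≤ τ x.length := by have := i.isLt; omega
          have hpf : (⟨x.length + i.val - 1, hp⟩ : Fin w'.length)
              = ⟨x.length + t, by omega⟩ := Fin.ext (by simp; omega)
          have htgt : (gCoT M τ x).get i = (gCoT M τ x)[t + 1]'(by omega) := by
            rw [List.get_eq_getElem]
            simp only [hti]
          rw [hpf, hgetw t _ (by omega), hyA t htτ (by omega), htgt]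
          rcases Nat.lt_or_ge t (τ x.length) with htlt | htge
          · -- simulation step
            have hne : ¬ (((x.length + t : ℕ) : ℝ) = ((n - 2 : ℕ) : ℝ)) := by
              intro hcast
              have := Nat.cast_injective hcast
              omega
            have harg := argmax_config M τ n w'.get ⟨x.length + t, by omega⟩ (M.tokAt x t)
              (by rw [hgetw t _ (by omega), hyA t htτ (by omega)])
              (le_trans (M.tokAt_fst_le x t) (Nat.le_add_left t x.length))
            rw [harg, hyA (t + 1) (by omega) (by omega)]
            by_cases hqm : (M.tokAt x t).1 < x.length
            · rw [hgetx _ _ hqm]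
              simp only [nxtTok]
              rw [if_neg hne, M.tokAt_succ, List.getD_eq_getElem x M.blank hqm]
            · push_neg at hqm
              have hfe : ∀ (hq : (M.tokAt x t).1 < w'.length),
                  (⟨(M.tokAt x t).1, hq⟩ : Fin w'.length)
                  = ⟨x.length + ((M.tokAt x t).1 - x.length), by
                      have := M.tokAt_fst_le x t; omega⟩ :=
                fun hq => Fin.ext (by simp; omega)
              rw [hfe, hgetw _ _ (by have := M.tokAt_fst_le x t; omega),
                hyA _ (by have := M.tokAt_fst_le x t; omega)
                  (by have := M.tokAt_fst_le x t; omega)]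
              simp only [nxtTok]
              rw [if_neg hne, M.tokAt_succ, List.getD_eq_default x M.blank hqm]
          · -- final step: output the answer
            have ht : t = τ x.length := by omega
            subst ht
            have hpos : ((x.length + τ x.length : ℕ) : ℝ) = ((n - 2 : ℕ) : ℝ) :=
              congrArg Nat.cast (by omega)
            simp only [nxtTok]
            rw [if_pos hpos, hyLast (by omega)]
            rfl
    rw [key]
    funext v
    have hmem : (gCoT M τ x).get i ∈ Sfin M τ n :=
      mem_Sfin M τ n (x := x) (by omega)
        (List.mem_append_right _ (List.get_mem (gCoT M τ x) i))
    have hout : (TT M τ n).outm = outV M τ n := rfl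
    rw [hout, outV_dot M τ n v hmem, oneHot]
    split_ifs <;> rfl
  · -- ends in the answer
    intro x k hmin hk
    obtain ⟨k₀, hk₀le, hk₀⟩ := hhalt x
    have hkle : k ≤ τ x.length := by
      by_contra h
      push_neg at h
      rw [hmin k₀ (lt_of_le_of_lt hk₀le h)] at hk₀
      exact Bool.false_ne_true hk₀
    have h1 : M.fcfg x k = M.cfgAt x k := M.fcfg_eq_cfgAt hmin
    have h2 : M.fcfg x (τ x.length) = M.fcfg x k := by
      rw [show τ x.length = k + (τ x.length - k) by omega]
      exact M.fcfg_add_of_halt (by rw [h1]; exact hk) _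
    have hans : ansB M τ x = M.accept (M.cfgAt x k).state := by
      rw [ansB, (M.tokAt_sim x (τ x.length)).2.1, h2, h1]
    rw [← hans, gCoT]
    by_cases hx : x.length = 0
    · rw [if_pos hx]
      exact ⟨List.replicate (τ 0 + 1) _, by rw [← List.replicate_succ']⟩
    · rw [if_neg hx]
      exact ⟨_, rfl⟩
  · -- length bound
    exact ⟨2, by norm_num, fun x => by rw [gCoT_length]; omega⟩
/-- **Universality of UHAT CoTs.** Let `M` be a Turing machine halting within
`τ(|x|)` steps on every input `x`. Then there is a chain of thought `g` over a countable
alphabet, expressible in UHAT, that on every input `x` ends in the output of `M` on `x`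
(accept/reject, encoded via `ιB`) and has length `O(τ(|x|))`. -/
theorem turing_machine_cot {Γ Q : Type*} [Fintype Γ] [Fintype Q] [DecidableEq Γ]
    (M : TuringMachine Γ Q) (τ : ℕ → ℕ)
    (hhalt : ∀ x : List Γ, ∃ k ≤ τ x.length, M.halt (M.cfgAt x k).state = true) :
    ∃ (Ξ : Type) (_ : Countable Ξ) (ιΓ : Γ → Ξ) (ιB : Bool → Ξ),
      Function.Injective ιΓ ∧ Function.Injective ιB ∧
      ∃ g : List Γ → List Ξ, ExpressibleUHAT ιΓ g ∧
        (∀ (x : List Γ) (k : ℕ),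
          (∀ k' < k, M.halt (M.cfgAt x k').state = false) →
          M.halt (M.cfgAt x k).state = true →
          [ιB (M.accept (M.cfgAt x k).state)] <:+ g x) ∧
        ∃ c : ℕ, 0 < c ∧ ∀ x : List Γ, (g x).length ≤ c * (τ x.length + 1) := by
  classical
  let eΓ : Γ ≃ Fin (Fintype.card Γ) := Fintype.equivFin Γ
  let eQ : Q ≃ Fin (Fintype.card Q) := Fintype.equivFin Q
  set M' : TuringMachine (Fin (Fintype.card Γ)) (Fin (Fintype.card Q)) := M.mapTM eΓ eQ
    with hM'
  have hcfg : ∀ (x : List Γ) (k : ℕ), M'.cfgAt (x.map eΓ) k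
      = TuringMachine.mapCfg eΓ eQ (M.cfgAt x k) := fun x k => M.mapTM_cfgAt eΓ eQ x k
  have hhalt' : ∀ x' : List (Fin (Fintype.card Γ)),
      ∃ k ≤ τ x'.length, M'.halt (M'.cfgAt x' k).state = true := by
    intro x'
    obtain ⟨k, hk1, hk2⟩ := hhalt (x'.map eΓ.symm)
    refine ⟨k, by simpa using hk1, ?_⟩
    have hx' : x' = (x'.map eΓ.symm).map eΓ := by
      simp [List.map_map]
    rw [hx', hcfg]
    show M.halt (eQ.symm (eQ _)) = true
    rw [Equiv.symm_apply_apply]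
    exact hk2
  obtain ⟨Ξ, hC, ι1, ι2, hinj1, hinj2, g', hexp, hsuf, c, hc, hlen⟩ := master_cot M' τ hhalt'
  refine ⟨Ξ, hC, fun γ => ι1 (eΓ γ), ι2, hinj1.comp eΓ.injective, hinj2,
    fun x => g' (x.map eΓ), ?_, ?_, ⟨c, hc, ?_⟩⟩
  · obtain ⟨L, H, hT⟩ := hexp
    refine ⟨L, H, fun n => ?_⟩
    obtain ⟨T, hL, hH, hcomp⟩ := hT n
    refine ⟨T, hL, hH, fun x hx => ?_⟩
    have hmap : x.map (fun γ => ι1 (eΓ γ)) = (x.map eΓ).map ι1 := by simp [List.map_map]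
    rw [hmap] at hx ⊢
    exact hcomp (x.map eΓ) hx
  · intro x k hmin hk
    have h1 : ∀ k' < k, M'.halt (M'.cfgAt (x.map eΓ) k').state = false := by
      intro k' hk'
      rw [hcfg]
      show M.halt (eQ.symm (eQ _)) = false
      rw [Equiv.symm_apply_apply]
      exact hmin k' hk'
    have h2 : M'.halt (M'.cfgAt (x.map eΓ) k).state = true := by
      rw [hcfg]
      show M.halt (eQ.symm (eQ _)) = true
      rw [Equiv.symm_apply_apply]
      exact hk
    have hs := hsuf (x.map eΓ) k h1 h2
    have hacc : M'.accept (M'.cfgAt (x.map eΓ) k).state = M.accept (M.cfgAt x k).state := by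
      rw [hcfg]
      show M.accept (eQ.symm (eQ _)) = _
      rw [Equiv.symm_apply_apply]
    rw [hacc] at hs
    exact hs
  · intro x
    simpa using hlen (x.map eΓ)
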